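/- Let d ≥ 2 be an integer and a a nonzero rational number. Then every rational periodic cycle of ψ_{d,a,1} on ℙ¹(ℚ) has length 1 or 2. Moreover, a rational periodic cycle of length 2 can exist only if d is even; in that case there is at most one such cycle, and any such cycle consists of two points z and −z with z ∈ ℚ satisfying a·z^d = −2. -/

import Mathlib

/-- The map `ψ_{d,a,b} : ℙ¹(ℚ) → ℙ¹(ℚ)`, with `ℙ¹(ℚ)` modeled as `Option ℚ`
(`some z` is the affine point `z`, and `none` is the point at infinity `[1 : 0]`).
In homogeneous coordinates the map is `[X : Y] ↦ [X·Y^{d−1} : a·X^d + b·Y^d]`;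
on the affine chart it is `z ↦ z / (a·z^d + b)`, the point at infinity mapping to `0`. -/
def psi (d : ℕ) (a b : ℚ) : Option ℚ → Option ℚ
  | none => some 0
  | some z => if a * z ^ d + b = 0 then none else some (z / (a * z ^ d + b))

namespace PsiAux

open Function

lemma psi_zero_fixed {d : ℕ} {a : ℚ} (hd : d ≠ 0) : psi d a 1 (some 0) = some 0 := by
  simp [psi, zero_pow hd]

lemma iterate_zero_fixed {d : ℕ} {a : ℚ} (hd : d ≠ 0) (k : ℕ) :
    (psi d a 1)^[k] (some 0) = some 0 :=
  Function.iterate_fixed (psi_zero_fixed hd) k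

lemma iterate_none {d : ℕ} {a : ℚ} (hd : d ≠ 0) (k : ℕ) (hk : 0 < k) :
    (psi d a 1)^[k] none = some 0 := by
  obtain ⟨m, rfl⟩ : ∃ m, k = m + 1 := ⟨k - 1, by omega⟩
  rw [Function.iterate_succ_apply]
  have h : psi d a 1 none = some 0 := rfl
  rw [h]
  exact iterate_zero_fixed hd m

/-- A nonzero valuation bound at every prime forces an integral rational. -/
lemma den_one_of_padic (q : ℚ) (h : ∀ p : ℕ, p.Prime → 0 ≤ padicValRat p q) : q.den = 1 := by
  by_contra hden
  obtain ⟨p, pp, hpd⟩ := Nat.exists_prime_and_dvd hden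
  haveI : Fact p.Prime := ⟨pp⟩
  have h1 : padicValInt p q.num = 0 := by
    apply padicValInt.eq_zero_of_not_dvd
    intro hdvd
    have h2 : p ∣ q.num.natAbs := by
      have := Int.natAbs_dvd_natAbs.mpr hdvd
      simpa using this
    have h3 : p ∣ Nat.gcd q.num.natAbs q.den := Nat.dvd_gcd h2 hpd
    have h4 : Nat.gcd q.num.natAbs q.den = 1 := q.reduced
    rw [h4] at h3
    exact pp.ne_one (Nat.dvd_one.mp h3)
  have h3 : 1 ≤ padicValNat p q.den := one_le_padicValNat_of_dvd q.den_pos.ne' hpd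
  have h4 := h p pp
  rw [padicValRat_def] at h4
  omega

/-- Key structural lemma: a nonzero affine periodic point is either fixed, or (when `d` is
even) is a point of period two of the shape described in the statement. -/
lemma key (d : ℕ) (hd : 2 ≤ d) (a : ℚ) (ha : a ≠ 0) (z : ℚ) (hz : z ≠ 0)
    (n : ℕ) (hn : 0 < n) (hper : (psi d a 1)^[n] (some z) = some z) :
    psi d a 1 (some z) = some z ∨
      (Even d ∧ a * z ^ d = -2 ∧ psi d a 1 (some z) = some (-z) ∧
        (psi d a 1)^[2] (some z) = some z) := by
  have hd0 : d ≠ 0 := by omega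
  -- iterated periodicity
  have hmul : ∀ m : ℕ, (psi d a 1)^[n * m] (some z) = some z := by
    intro m
    induction m with
    | zero => simp
    | succ m ih =>
      rw [Nat.mul_succ, Function.iterate_add_apply, hper, ih]
  -- the orbit avoids `none` and `some 0`
  have horbit : ∀ i, (psi d a 1)^[i] (some z) ≠ none ∧ (psi d a 1)^[i] (some z) ≠ some 0 := by
    intro i
    have hkill : ((psi d a 1)^[i] (some z) = none ∨ (psi d a 1)^[i] (some z) = some 0) → False := by
      intro hcase
      have h1 : (psi d a 1)^[i + 1] (some z) = some 0 := by
        rw [Function.iterate_succ_apply']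
        rcases hcase with h | h <;> rw [h]
        · rfl
        · exact psi_zero_fixed hd0
      have h2 : (psi d a 1)^[n * (i + 1)] (some z) = some z := hmul (i + 1)
      have hle : i + 1 ≤ n * (i + 1) := by
        have := Nat.mul_le_mul_right (i + 1) hn
        simpa using this
      have h3 : n * (i + 1) = (n * (i + 1) - (i + 1)) + (i + 1) := by omega
      rw [h3, Function.iterate_add_apply, h1, iterate_zero_fixed hd0] at h2
      exact hz (Option.some.inj h2).symm
    exact ⟨fun h => hkill (Or.inl h), fun h => hkill (Or.inr h)⟩
  -- the affine orbit sequence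
  set Z : ℕ → ℚ := fun i => ((psi d a 1)^[i] (some z)).getD 0 with hZdef
  have hZ : ∀ i, (psi d a 1)^[i] (some z) = some (Z i) := by
    intro i
    rcases h : (psi d a 1)^[i] (some z) with _ | w
    · exact absurd h (horbit i).1
    · simp [hZdef, h]
  have hZ0 : ∀ i, Z i ≠ 0 := by
    intro i hzi
    exact (horbit i).2 (by rw [hZ i, hzi])
  have hZz : Z 0 = z := by
    have h0 := hZ 0
    simp only [Function.iterate_zero, id_eq] at h0
    exact (Option.some.inj h0).symm
  -- the defining recursion
  have hc : ∀ i, a * Z i ^ d + 1 ≠ 0 ∧ Z (i + 1) = Z i / (a * Z i ^ d + 1) := by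
    intro i
    have h1 : psi d a 1 (some (Z i)) = some (Z (i + 1)) := by
      have h0 := hZ (i + 1)
      rw [Function.iterate_succ_apply', hZ i] at h0
      exact h0
    by_cases h : a * Z i ^ d + 1 = 0
    · simp [psi, h] at h1
    · refine ⟨h, ?_⟩
      simp only [psi, if_neg h] at h1
      exact (Option.some.inj h1).symm
  -- periodicity of the sequence
  have hZper : ∀ i, Z (i + n) = Z i := by
    intro i
    have h1 := hZ (i + n)
    rw [Function.iterate_add_apply, hper, hZ i] at h1
    exact (Option.some.inj h1).symm
  have hZperm : ∀ i m, Z (i + n * m) = Z i := by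
    intro i m
    induction m with
    | zero => simp
    | succ m ih => rw [Nat.mul_succ, ← Nat.add_assoc, hZper, ih]
  -- telescoping products
  have hprod : ∀ i k, (∏ j ∈ Finset.range k, (a * Z (i + j) ^ d + 1)) = Z i / Z (i + k) := by
    intro i k
    induction k with
    | zero => simp [div_self (hZ0 i)]
    | succ k ih =>
      have h2 : Z (i + (k + 1)) = Z (i + k) / (a * Z (i + k) ^ d + 1) := (hc (i + k)).2
      rw [Finset.prod_range_succ, ih, h2, div_mul_eq_mul_div, div_div_eq_mul_div]
  -- all the quantities `a * Z i ^ d + 1` have nonnegative valuation at every prime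
  have hval : ∀ (i : ℕ) (p : ℕ), p.Prime → 0 ≤ padicValRat p (a * Z i ^ d + 1) := by
    intro i p hp
    haveI : Fact p.Prime := ⟨hp⟩
    by_contra hneg
    push_neg at hneg
    have hx0 : ∀ j, a * Z j ^ d ≠ 0 := fun j => mul_ne_zero ha (pow_ne_zero _ (hZ0 j))
    have hvx : padicValRat p (a * Z i ^ d) = padicValRat p (a * Z i ^ d + 1) := by
      have h1 : padicValRat p ((a * Z i ^ d + 1) + (-1)) = padicValRat p (a * Z i ^ d + 1) :=
        padicValRat.add_eq_of_lt (by rw [add_neg_cancel_right]; exact hx0 i) (hc i).1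
          (by norm_num) (by simpa using hneg)
      rw [add_neg_cancel_right] at h1
      exact h1
    have hmulpow : ∀ j, padicValRat p (a * Z j ^ d) =
        padicValRat p a + d * padicValRat p (Z j) := by
      intro j
      rw [padicValRat.mul ha (pow_ne_zero _ (hZ0 j)), padicValRat.pow (Z j)]
    have hZsucc : ∀ j, padicValRat p (Z (j + 1)) =
        padicValRat p (Z j) - padicValRat p (a * Z j ^ d + 1) := by
      intro j
      rw [(hc j).2, padicValRat.div (hZ0 j) (hc j).1]
    have step : ∀ j, 0 < padicValRat p (a * Z j ^ d) →
        padicValRat p (Z (j + 1)) = padicValRat p (Z j) ∧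
          0 < padicValRat p (a * Z (j + 1) ^ d) := by
      intro j hpos
      have hvcj : padicValRat p (a * Z j ^ d + 1) = 0 := by
        have h1 : padicValRat p ((1 : ℚ) + a * Z j ^ d) = padicValRat p (1 : ℚ) :=
          padicValRat.add_eq_of_lt (by rw [add_comm]; exact (hc j).1) one_ne_zero (hx0 j)
            (by simpa using hpos)
        rw [add_comm] at h1
        simpa using h1
      have h1 : padicValRat p (Z (j + 1)) = padicValRat p (Z j) := by
        rw [hZsucc j, hvcj, sub_zero]
      exact ⟨h1, by rw [hmulpow, h1, ← hmulpow]; exact hpos⟩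
    have hpos1 : 0 < padicValRat p (a * Z (i + 1) ^ d) := by
      have h1 : padicValRat p a + (d : ℤ) * padicValRat p (Z i)
          = padicValRat p (a * Z i ^ d + 1) := by rw [← hmulpow i, hvx]
      have h2 := hZsucc i
      rw [hmulpow (i + 1), h2]
      have hd2 : (2 : ℤ) ≤ (d : ℤ) := by exact_mod_cast hd
      nlinarith [mul_pos (show (0:ℤ) < (d:ℤ) - 1 by linarith)
        (show (0:ℤ) < -padicValRat p (a * Z i ^ d + 1) by linarith)]
    have persist : ∀ k, padicValRat p (Z (i + 1 + k)) = padicValRat p (Z (i + 1)) ∧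
        0 < padicValRat p (a * Z (i + 1 + k) ^ d) := by
      intro k
      induction k with
      | zero => exact ⟨rfl, hpos1⟩
      | succ k ih =>
        have hstep := step (i + 1 + k) ih.2
        exact ⟨hstep.1.trans ih.1, hstep.2⟩
    have hK : i + n * (i + 1) = (i + 1) + (n * (i + 1) - 1) := by
      have h1 : 1 ≤ n * (i + 1) := Nat.one_le_iff_ne_zero.mpr (by positivity)
      omega
    have hcontr : padicValRat p (Z i) = padicValRat p (Z (i + 1)) := by
      have h1 := hZperm i (i + 1)
      have h2 := (persist (n * (i + 1) - 1)).1
      rw [← hK, h1] at h2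
      exact h2
    have h5 := hZsucc i
    rw [← hcontr] at h5
    linarith
  -- each multiplier is `1` or `-1`
  have hunit : ∀ i, a * Z i ^ d + 1 = 1 ∨ a * Z i ^ d + 1 = -1 := by
    intro i
    have hintg : ∀ j : ℕ, ∃ m : ℤ, (m : ℚ) = a * Z (i + j) ^ d + 1 := fun j =>
      ⟨(a * Z (i + j) ^ d + 1).num,
        Rat.coe_int_num_of_den_eq_one (den_one_of_padic _ (hval (i + j)))⟩
    choose M hM using hintg
    have hp1 : (∏ j ∈ Finset.range n, (M j : ℚ)) = 1 := by
      rw [Finset.prod_congr rfl fun j _ => hM j, hprod i n, hZper i, div_self (hZ0 i)]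
    have hp2 : (∏ j ∈ Finset.range n, M j) = 1 := by
      have h1 : ((∏ j ∈ Finset.range n, M j : ℤ) : ℚ) = 1 := by
        rw [Int.cast_prod]; exact hp1
      exact_mod_cast h1
    have hdvd : M 0 ∣ 1 :=
      hp2 ▸ Finset.dvd_prod_of_mem M (Finset.mem_range.mpr hn)
    rcases Int.isUnit_iff.mp (isUnit_of_dvd_one hdvd) with h | h
    · left
      have h1 := hM 0
      rw [h] at h1
      simpa using h1.symm
    · right
      have h1 := hM 0
      rw [h] at h1
      simpa using h1.symm
  -- final case analysis
  rcases hunit 0 with h1 | h1 <;> rw [hZz] at h1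
  · left
    simp [psi, h1]
  · right
    have hne2 : a * z ^ d = -2 := by linarith
    have hZ1 : Z 1 = -z := by
      have h3 : Z (0 + 1) = Z 0 / (a * Z 0 ^ d + 1) := (hc 0).2
      rw [hZz, h1] at h3
      rw [show Z 1 = Z (0 + 1) from rfl, h3, div_neg, div_one]
    have hev : Even d := by
      rcases Nat.even_or_odd d with hev | hod
      · exact hev
      · exfalso
        have h2 := hunit 1
        rw [hZ1, hod.neg_pow, mul_neg, hne2] at h2
        norm_num at h2
    have hstep1 : psi d a 1 (some z) = some (-z) := by
      have hne : a * z ^ d + 1 ≠ 0 := by rw [h1]; norm_num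
      simp only [psi, h1, div_neg, div_one]
      norm_num
    refine ⟨hev, hne2, hstep1, ?_⟩
    have h2 : a * (-z) ^ d + 1 = -1 := by rw [hev.neg_pow]; exact h1
    have hstep2 : psi d a 1 (some (-z)) = some z := by
      have hne : a * (-z) ^ d + 1 ≠ 0 := by rw [h2]; norm_num
      simp only [psi, h2, div_neg, div_one, neg_neg]
      norm_num
    calc (psi d a 1)^[2] (some z) = psi d a 1 (psi d a 1 (some z)) := by
          rw [Function.iterate_succ_apply', Function.iterate_one]
      _ = some z := by rw [hstep1, hstep2]

end PsiAux

/-- For `d ≥ 2` and a nonzero rational `a`: every rational periodic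
cycle of `ψ_{d,a,1}` has length `1` or `2`; a cycle of length `2` can exist only if
`d` is even, in which case any point of exact period `2` is an affine point `z` with
`a·z^d = −2` whose cycle is `{z, −z}`, and there is at most one such cycle (i.e. at
most two points of exact period `2`). -/
theorem periodic_cycles_psi_b_one
    (d : ℕ) (hd : 2 ≤ d) (a : ℚ) (ha : a ≠ 0) :
    (∀ P : Option ℚ, (∃ n : ℕ, 0 < n ∧ (psi d a 1)^[n] P = P) →
      Function.minimalPeriod (psi d a 1) P = 1 ∨
        Function.minimalPeriod (psi d a 1) P = 2) ∧
    (∀ P : Option ℚ, Function.minimalPeriod (psi d a 1) P = 2 →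
      Even d ∧ ∃ z : ℚ, P = some z ∧ a * z ^ d = -2 ∧ psi d a 1 (some z) = some (-z)) ∧
    {P : Option ℚ | Function.minimalPeriod (psi d a 1) P = 2}.encard ≤ 2 := by
  have hd0 : d ≠ 0 := by omega
  haveI : Fact (Nat.Prime 2) := ⟨Nat.prime_two⟩
  have part1 : ∀ P : Option ℚ, (∃ n : ℕ, 0 < n ∧ (psi d a 1)^[n] P = P) →
      Function.minimalPeriod (psi d a 1) P = 1 ∨
        Function.minimalPeriod (psi d a 1) P = 2 := by
    rintro P ⟨n, hn, hper⟩
    cases P with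
    | none =>
      exfalso
      rw [PsiAux.iterate_none hd0 n hn] at hper
      exact nomatch hper
    | some z =>
      by_cases hz : z = 0
      · subst hz
        left
        exact Function.minimalPeriod_eq_one_iff_isFixedPt.mpr (PsiAux.psi_zero_fixed hd0)
      · rcases PsiAux.key d hd a ha z hz n hn hper with hfix | ⟨hev, h2, h3, h4⟩
        · left
          exact Function.minimalPeriod_eq_one_iff_isFixedPt.mpr hfix
        · right
          refine Function.minimalPeriod_eq_prime (h4 : Function.IsPeriodicPt _ 2 _) ?_
          intro hfix
          rw [Function.IsFixedPt, h3] at hfix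
          have h5 : -z = z := Option.some.inj hfix
          exact hz (by linarith)
  have part2 : ∀ P : Option ℚ, Function.minimalPeriod (psi d a 1) P = 2 →
      Even d ∧ ∃ z : ℚ, P = some z ∧ a * z ^ d = -2 ∧ psi d a 1 (some z) = some (-z) := by
    intro P h2
    have hper : (psi d a 1)^[2] P = P := by
      rw [← h2]; exact Function.iterate_minimalPeriod
    cases P with
    | none =>
      exfalso
      rw [PsiAux.iterate_none hd0 2 (by norm_num)] at hper
      exact nomatch hper
    | some z =>
      by_cases hz : z = 0
      · exfalso
        subst hz
        have h1 : Function.minimalPeriod (psi d a 1) (some (0:ℚ)) = 1 :=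
          Function.minimalPeriod_eq_one_iff_isFixedPt.mpr (PsiAux.psi_zero_fixed hd0)
        rw [h1] at h2
        exact absurd h2 (by norm_num)
      · rcases PsiAux.key d hd a ha z hz 2 (by norm_num) hper with hfix | ⟨hev, ha2, h3, _⟩
        · exfalso
          have h1 : Function.minimalPeriod (psi d a 1) (some z) = 1 :=
            Function.minimalPeriod_eq_one_iff_isFixedPt.mpr hfix
          rw [h1] at h2
          exact absurd h2 (by norm_num)
        · exact ⟨hev, z, rfl, ha2, h3⟩
  refine ⟨part1, part2, ?_⟩
  rcases Set.eq_empty_or_nonempty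
      {P : Option ℚ | Function.minimalPeriod (psi d a 1) P = 2} with hS | ⟨P0, hP0⟩
  · rw [hS]
    simp
  · obtain ⟨hev, z0, hPz0, hz0d, _⟩ := part2 P0 hP0
    have hsub : {P : Option ℚ | Function.minimalPeriod (psi d a 1) P = 2} ⊆
        {some z0, some (-z0)} := by
      intro P hP
      obtain ⟨_, z, rfl, hzd, _⟩ := part2 P hP
      have hzz : z ^ d = z0 ^ d := by
        have h1 : a * z ^ d = a * z0 ^ d := hzd.trans hz0d.symm
        exact mul_left_cancel₀ ha h1
      have habs : |z| = |z0| := by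
        have h1 : |z| ^ d = |z0| ^ d := by rw [hev.pow_abs, hev.pow_abs, hzz]
        by_contra hne
        rcases lt_or_gt_of_ne hne with h | h
        · exact absurd h1 (ne_of_lt (pow_lt_pow_left₀ h (abs_nonneg z) hd0))
        · exact absurd h1.symm (ne_of_lt (pow_lt_pow_left₀ h (abs_nonneg z0) hd0))
      rcases abs_eq_abs.mp habs with h | h <;> simp [h]
    calc {P : Option ℚ | Function.minimalPeriod (psi d a 1) P = 2}.encard
        ≤ ({some z0, some (-z0)} : Set (Option ℚ)).encard := Set.encard_le_encard hsub
      _ ≤ ({some (-z0)} : Set (Option ℚ)).encard + 1 := Set.encard_insert_le _ _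
      _ ≤ 2 := by rw [Set.encard_singleton]; norm_num
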